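/- The 'lace to rank' formula: if V ≅ ⊕_{J'} s_{J'} I_{J'} is the Krull–Schmidt decomposition of a representation V of a bipartite type A quiver, then for every interval J, r_J(V) = Σ_{J'} s_{J'} ⌈#(J ∩ J')/2⌉. -/

import Mathlib

open Matrix Module

section BlockDiag

variable {o m n : Type*} [Fintype o] [Fintype m] [Fintype n] [DecidableEq o]

/-- The pi of submodules is linearly equivalent to the pi of the submodules. -/
noncomputable def piSubmoduleEquiv {ι : Type*} {V : ι → Type*} [∀ i, AddCommGroup (V i)]
    [∀ i, Module ℚ (V i)] (p : ∀ i, Submodule ℚ (V i)) :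
    (Submodule.pi Set.univ p) ≃ₗ[ℚ] (∀ i, p i) where
  toFun x := fun i => ⟨x.1 i, x.2 i (Set.mem_univ i)⟩
  map_add' x y := rfl
  map_smul' c x := rfl
  invFun y := ⟨fun i => (y i).1, fun i _ => (y i).2⟩
  left_inv x := rfl
  right_inv y := rfl

noncomputable def curryEquiv (m o : Type*) : ((m × o) → ℚ) ≃ₗ[ℚ] (o → m → ℚ) where
  toFun v := fun k i => v (i, k)
  map_add' x y := rfl
  map_smul' c x := rfl
  invFun y := fun p => y p.2 p.1
  left_inv x := rfl
  right_inv y := rfl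

theorem rank_blockDiagonal (B : o → Matrix m n ℚ) :
    (Matrix.blockDiagonal B).rank = ∑ k, (B k).rank := by
  classical
  set g : (o → n → ℚ) →ₗ[ℚ] (o → m → ℚ) :=
    LinearMap.pi (fun k => (B k).mulVecLin.comp (LinearMap.proj k)) with hg
  have key : g = ((curryEquiv m o).toLinearMap.comp
      ((Matrix.blockDiagonal B).mulVecLin.comp (curryEquiv n o).symm.toLinearMap)) := by
    apply LinearMap.ext
    intro y
    funext k i
    show (B k).mulVec (y k) i = (blockDiagonal B).mulVec (fun p => y p.2 p.1) (i, k)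
    simp [mulVec, dotProduct, blockDiagonal_apply, Fintype.sum_prod_type, ite_mul,
      Finset.sum_ite_eq]
  have hrange : LinearMap.range g
      = Submodule.pi Set.univ (fun k => LinearMap.range (B k).mulVecLin) := by
    ext x
    simp only [LinearMap.mem_range, Submodule.mem_pi, Set.mem_univ, forall_true_left]
    constructor
    · rintro ⟨y, rfl⟩ k
      exact ⟨y k, rfl⟩
    · intro h
      choose y hy using h
      exact ⟨y, by funext k; simpa [hg] using hy k⟩
  have h1 : (Matrix.blockDiagonal B).rank = finrank ℚ (LinearMap.range g) := by
    rw [key, LinearMap.range_comp, LinearMap.range_comp, LinearEquiv.range,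
      Submodule.map_top, LinearEquiv.finrank_map_eq]
    rfl
  rw [h1, hrange, LinearEquiv.finrank_eq (piSubmoduleEquiv (fun k => LinearMap.range (B k).mulVecLin)), Module.finrank_pi_fintype]
  rfl

end BlockDiag


theorem rank_submatrix_le' {k l m n : Type*} [Fintype k] [Fintype l] [Fintype m] [Fintype n]
    [DecidableEq m] [DecidableEq n] (A : Matrix m n ℚ) (f : k → m) (g : l → n) :
    (A.submatrix f g).rank ≤ A.rank := by
  have h1 : ∀ (i : k) (jj : n),
      ((Matrix.of fun i j => if f i = j then (1 : ℚ) else 0) * A) i jj = A (f i) jj := by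
    intro i jj
    rw [Matrix.mul_apply]
    simp [ite_mul, Finset.sum_ite_eq]
  have hA : A.submatrix f g =
      (Matrix.of fun i j => if f i = j then (1 : ℚ) else 0) * A *
        (Matrix.of fun j i => if g i = j then (1 : ℚ) else 0) := by
    ext i j
    rw [Matrix.mul_apply]
    simp only [Matrix.of_apply, h1, mul_ite, mul_one, mul_zero, Finset.sum_ite_eq,
      Finset.mem_univ, if_true]
    rfl
  rw [hA]
  exact le_trans (Matrix.rank_mul_le_left _ _) (Matrix.rank_mul_le_right _ _)

theorem pathRank (N m M : ℕ) (hM : M ≤ N) :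
    (Matrix.of fun v v' : Fin (N+1) =>
      if Even v.val ∧ ¬ Even v'.val ∧ (v.val = v'.val + 1 ∨ v'.val = v.val + 1) ∧
         m ≤ v.val ∧ v.val ≤ M ∧ m ≤ v'.val ∧ v'.val ≤ M then (1:ℚ) else 0).rank
    = (M - m + 1) / 2 := by
  set A : Matrix (Fin (N+1)) (Fin (N+1)) ℚ := Matrix.of fun v v' : Fin (N+1) =>
      if Even v.val ∧ ¬ Even v'.val ∧ (v.val = v'.val + 1 ∨ v'.val = v.val + 1) ∧
         m ≤ v.val ∧ v.val ≤ M ∧ m ≤ v'.val ∧ v'.val ≤ M then (1:ℚ) else 0 with hAdef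
  rcases le_or_gt m M with hmM | hmM
  · set k : ℕ := (M - m + 1) / 2 with hk
    rcases Nat.even_or_odd m with hm | hm
    · -- m even
      rw [Nat.even_iff] at hm
      have hub : A.rank ≤ k := by
        have hfac : A = (Matrix.of fun (v : Fin (N+1)) (i : Fin k) =>
              A v ⟨m + 2*i.val + 1, by omega⟩) *
            (Matrix.of fun (i : Fin k) (v' : Fin (N+1)) =>
              if v'.val = m + 2*i.val + 1 then (1:ℚ) else 0) := by
          ext v v'
          rw [Matrix.mul_apply]
          by_cases h : ∃ i : Fin k, v'.val = m + 2 * i.val + 1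
          · obtain ⟨i, hi⟩ := h
            rw [Finset.sum_eq_single i]
            · have hv' : (⟨m + 2*i.val + 1, by omega⟩ : Fin (N+1)) = v' := by
                apply Fin.ext; simp only [Fin.val_mk]; omega
              simp [hv', hi]
            · intro j _ hj
              have : ¬ (v'.val = m + 2*j.val + 1) := by
                intro hc; exact hj (Fin.ext (by omega))
              simp [this]
            · simp
          · have h0 : A v v' = 0 := by
              rw [hAdef]
              simp only [Matrix.of_apply]
              rw [if_neg]
              rintro ⟨h1, h2, h3, h4, h5, h6, h7⟩
              rw [Nat.even_iff] at h1; rw [Nat.not_even_iff] at h2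
              exact h ⟨⟨(v'.val - m - 1)/2, by omega⟩, by simp only [Fin.val_mk]; omega⟩
            rw [h0]
            refine (Finset.sum_eq_zero fun j _ => ?_).symm
            have := not_exists.mp h j
            simp [this]
        calc A.rank = ((Matrix.of fun (v : Fin (N+1)) (i : Fin k) =>
              A v ⟨m + 2*i.val + 1, by omega⟩) *
            (Matrix.of fun (i : Fin k) (v' : Fin (N+1)) =>
              if v'.val = m + 2*i.val + 1 then (1:ℚ) else 0)).rank := by rw [← hfac]
          _ ≤ (Matrix.of fun (i : Fin k) (v' : Fin (N+1)) =>
              if v'.val = m + 2*i.val + 1 then (1:ℚ) else 0).rank :=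
              Matrix.rank_mul_le_right _ _
          _ ≤ Fintype.card (Fin k) := Matrix.rank_le_card_height _
          _ = k := Fintype.card_fin k
      have hlb : k ≤ A.rank := by
        set S : Matrix (Fin k) (Fin k) ℚ :=
          A.submatrix (fun i : Fin k => (⟨m + 2*i.val, by omega⟩ : Fin (N+1)))
            (fun i : Fin k => (⟨m + 2*i.val + 1, by omega⟩ : Fin (N+1))) with hS
        have htri : S.BlockTriangular OrderDual.toDual := by
          intro i j hij
          have hij' : (i : ℕ) < (j : ℕ) := hij
          rw [hS]
          simp only [Matrix.submatrix_apply, hAdef, Matrix.of_apply, Fin.val_mk]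
          rw [if_neg]
          rintro ⟨h1, h2, h3, h4, h5, h6, h7⟩
          omega
        have hdiag : ∀ i : Fin k, S i i = 1 := by
          intro i
          rw [hS]
          simp only [Matrix.submatrix_apply, hAdef, Matrix.of_apply, Fin.val_mk]
          exact if_pos ⟨Nat.even_iff.mpr (by omega), Nat.not_even_iff.mpr (by omega),
            Or.inr trivial, by omega, by omega, by omega, by omega⟩
        have hdet : S.det = 1 := by
          rw [Matrix.det_of_lowerTriangular S htri]
          simp [hdiag]
        have hunit : IsUnit S := by
          rw [Matrix.isUnit_iff_isUnit_det, hdet]; exact isUnit_one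
        have hr : S.rank = k := by
          rw [Matrix.rank_of_isUnit S hunit, Fintype.card_fin]
        rw [← hr]
        exact rank_submatrix_le' A _ _
      omega
    · -- m odd
      rw [Nat.odd_iff] at hm
      have hub : A.rank ≤ k := by
        have hfac : A = (Matrix.of fun (v : Fin (N+1)) (i : Fin k) =>
              if v.val = m + 2*i.val + 1 then (1:ℚ) else 0) *
            (Matrix.of fun (i : Fin k) (v' : Fin (N+1)) =>
              A ⟨m + 2*i.val + 1, by omega⟩ v') := by
          ext v v'
          rw [Matrix.mul_apply]
          by_cases h : ∃ i : Fin k, v.val = m + 2 * i.val + 1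
          · obtain ⟨i, hi⟩ := h
            rw [Finset.sum_eq_single i]
            · have hv : (⟨m + 2*i.val + 1, by omega⟩ : Fin (N+1)) = v := by
                apply Fin.ext; simp only [Fin.val_mk]; omega
              simp [hv, hi]
            · intro j _ hj
              have : ¬ (v.val = m + 2*j.val + 1) := by
                intro hc; exact hj (Fin.ext (by omega))
              simp [this]
            · simp
          · have h0 : A v v' = 0 := by
              rw [hAdef]
              simp only [Matrix.of_apply]
              rw [if_neg]
              rintro ⟨h1, h2, h3, h4, h5, h6, h7⟩
              rw [Nat.even_iff] at h1; rw [Nat.not_even_iff] at h2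
              exact h ⟨⟨(v.val - m - 1)/2, by omega⟩, by simp only [Fin.val_mk]; omega⟩
            rw [h0]
            refine (Finset.sum_eq_zero fun j _ => ?_).symm
            have := not_exists.mp h j
            simp [this]
        calc A.rank = ((Matrix.of fun (v : Fin (N+1)) (i : Fin k) =>
              if v.val = m + 2*i.val + 1 then (1:ℚ) else 0) *
            (Matrix.of fun (i : Fin k) (v' : Fin (N+1)) =>
              A ⟨m + 2*i.val + 1, by omega⟩ v')).rank := by rw [← hfac]
          _ ≤ (Matrix.of fun (v : Fin (N+1)) (i : Fin k) =>
              if v.val = m + 2*i.val + 1 then (1:ℚ) else 0).rank :=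
              Matrix.rank_mul_le_left _ _
          _ ≤ Fintype.card (Fin k) := Matrix.rank_le_card_width _
          _ = k := Fintype.card_fin k
      have hlb : k ≤ A.rank := by
        set S : Matrix (Fin k) (Fin k) ℚ :=
          A.submatrix (fun i : Fin k => (⟨m + 2*i.val + 1, by omega⟩ : Fin (N+1)))
            (fun i : Fin k => (⟨m + 2*i.val, by omega⟩ : Fin (N+1))) with hS
        have htri : S.BlockTriangular id := by
          intro i j hij
          have hij' : (j : ℕ) < (i : ℕ) := hij
          rw [hS]
          simp only [Matrix.submatrix_apply, hAdef, Matrix.of_apply, Fin.val_mk]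
          rw [if_neg]
          rintro ⟨h1, h2, h3, h4, h5, h6, h7⟩
          omega
        have hdiag : ∀ i : Fin k, S i i = 1 := by
          intro i
          rw [hS]
          simp only [Matrix.submatrix_apply, hAdef, Matrix.of_apply, Fin.val_mk]
          exact if_pos ⟨Nat.even_iff.mpr (by omega), Nat.not_even_iff.mpr (by omega),
            Or.inl trivial, by omega, by omega, by omega, by omega⟩
        have hdet : S.det = 1 := by
          rw [Matrix.det_of_upperTriangular htri]
          simp [hdiag]
        have hunit : IsUnit S := by
          rw [Matrix.isUnit_iff_isUnit_det, hdet]; exact isUnit_one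
        have hr : S.rank = k := by
          rw [Matrix.rank_of_isUnit S hunit, Fintype.card_fin]
        rw [← hr]
        exact rank_submatrix_le' A _ _
      omega
  · have hz : A = 0 := by
      ext v v'
      rw [hAdef]
      simp only [Matrix.of_apply, Matrix.zero_apply]
      rw [if_neg]
      rintro ⟨_, _, _, h4, h5, _⟩
      omega
    rw [hz, Matrix.rank_zero]
    omega

/-- lace-to-rank formula: if `V ≅ ⊕_{J'} s_{J'} I_{J'}` is the
Krull–Schmidt decomposition of a representation of the bipartite type `A` quiver with
vertices `0,…,N` (`N = 2n`; even vertices are the sinks `y_k`, odd vertices the sources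
`x_k`, each arrow joining consecutive vertices and oriented odd → even), then for every
interval `J` one has `r_J(V) = Σ_{J'} s_{J'} ⌈#(J ∩ J')/2⌉`.
Here `V` is modelled concretely: the space at vertex `v` has basis indexed by the triples
`(u,w,k)` with `u ≤ v ≤ w` and `k < s u w` (one basis vector for each copy of `I_{[u,w]}`
through `v`), and the snake matrix `M_J(V)` of the vertex interval `J = [a,b]` has a `1`
in position `((v,(u,w,k)), (v',(u',w',k')))` exactly when `(u,w,k) = (u',w',k')`, `v` is
even, `v'` is odd, `v,v'` are joined by an arrow of `J`, and both lie in `[u,w]`. -/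
theorem stmt5 (N a b : ℕ) (hab : a ≤ b) (hb : b ≤ N)
    (s : Fin (N + 1) → Fin (N + 1) → ℕ) :
    (Matrix.of (fun p q : Fin (N + 1) × ((u : Fin (N + 1)) × (w : Fin (N + 1)) × Fin (s u w)) =>
      if Even p.1.val ∧ ¬ Even q.1.val ∧
         (p.1.val = q.1.val + 1 ∨ q.1.val = p.1.val + 1) ∧
         a ≤ p.1.val ∧ p.1.val ≤ b ∧ a ≤ q.1.val ∧ q.1.val ≤ b ∧
         p.2 = q.2 ∧
         p.2.1.val ≤ p.1.val ∧ p.1.val ≤ p.2.2.1.val ∧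
         p.2.1.val ≤ q.1.val ∧ q.1.val ≤ p.2.2.1.val
      then (1 : ℚ) else 0)).rank
      = ∑ u : Fin (N + 1), ∑ w : Fin (N + 1),
          if u.val ≤ w.val then s u w * ((min b w.val - max a u.val + 1) / 2) else 0 := by
  classical
  set C : Fin (N+1) → Fin (N+1) → Matrix (Fin (N+1)) (Fin (N+1)) ℚ := fun u w =>
    Matrix.of fun v v' : Fin (N+1) =>
      if Even v.val ∧ ¬ Even v'.val ∧ (v.val = v'.val + 1 ∨ v'.val = v.val + 1) ∧
         max a u.val ≤ v.val ∧ v.val ≤ min b w.val ∧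
         max a u.val ≤ v'.val ∧ v'.val ≤ min b w.val then (1:ℚ) else 0 with hC
  have hblock : (Matrix.of (fun p q : Fin (N + 1) ×
      ((u : Fin (N + 1)) × (w : Fin (N + 1)) × Fin (s u w)) =>
      if Even p.1.val ∧ ¬ Even q.1.val ∧
         (p.1.val = q.1.val + 1 ∨ q.1.val = p.1.val + 1) ∧
         a ≤ p.1.val ∧ p.1.val ≤ b ∧ a ≤ q.1.val ∧ q.1.val ≤ b ∧
         p.2 = q.2 ∧
         p.2.1.val ≤ p.1.val ∧ p.1.val ≤ p.2.2.1.val ∧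
         p.2.1.val ≤ q.1.val ∧ q.1.val ≤ p.2.2.1.val
      then (1 : ℚ) else 0))
      = Matrix.blockDiagonal
          (fun x : (u : Fin (N + 1)) × (w : Fin (N + 1)) × Fin (s u w) => C x.1 x.2.1) := by
    ext ⟨v, x⟩ ⟨v', y⟩
    by_cases hxy : x = y
    · subst hxy
      rw [Matrix.blockDiagonal_apply_eq]
      simp only [Matrix.of_apply, hC]
      refine if_congr ⟨?_, ?_⟩ rfl rfl
      · rintro ⟨h1, h2, h3, h4, h5, h6, h7, -, h8, h9, h10, h11⟩
        exact ⟨h1, h2, h3, by omega, by omega, by omega, by omega⟩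
      · rintro ⟨h1, h2, h3, h4, h5, h6, h7⟩
        exact ⟨h1, h2, h3, by omega, by omega, by omega, by omega, trivial,
          by omega, by omega, by omega, by omega⟩
    · rw [Matrix.blockDiagonal_apply_ne _ _ _ hxy]
      simp only [Matrix.of_apply]
      rw [if_neg]
      rintro ⟨-, -, -, -, -, -, -, h, -⟩
      exact hxy h
  rw [hblock, rank_blockDiagonal]
  rw [← Finset.univ_sigma_univ, Finset.sum_sigma]
  refine Finset.sum_congr rfl fun u _ => ?_
  rw [← Finset.univ_sigma_univ, Finset.sum_sigma]
  refine Finset.sum_congr rfl fun w _ => ?_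
  have hrank : (C u w).rank = (min b w.val - max a u.val + 1) / 2 :=
    pathRank N (max a u.val) (min b w.val) (by omega)
  simp only [hrank]
  rw [Finset.sum_const, Finset.card_univ, Fintype.card_fin, smul_eq_mul]
  rcases le_or_gt u.val w.val with h | h
  · rw [if_pos h]
  · rw [if_neg (by omega)]
    have : (min b w.val - max a u.val + 1) / 2 = 0 := by omega
    rw [this, mul_zero]
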